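/- Let N be a connected minor of a connected finite matroid M and let e be an element of E(M) − E(N). Then M∖e or M/e is connected and has N as a minor. -/

import Mathlib

noncomputable section
open scoped Matroid

namespace Matroid

variable {α : Type*}

/-- The rank of a set `X` in a (finite) matroid `M`: the largest size of an independent
subset of `X`. -/
def rankOf (M : Matroid α) (X : Set α) : ℕ :=
  sSup {n | ∃ I, M.Indep I ∧ I ⊆ X ∧ I.ncard = n}

/-- `X` is a separator of `M`: `X ⊆ E` and `r(X) + r(E − X) = r(E)`. -/
def IsSep (M : Matroid α) (X : Set α) : Prop :=
  X ⊆ M.E ∧ M.rankOf X + M.rankOf (M.E \ X) = M.rankOf M.E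

/-- `M` is connected: it has no proper separator. -/
def IsConn (M : Matroid α) : Prop :=
  ¬ ∃ X, M.IsSep X ∧ X.Nonempty ∧ X ≠ M.E

/-- The matroid `M∖e` obtained by deleting the element `e`. -/
def delElem (M : Matroid α) (e : α) : Matroid α := M ↾ (M.E \ {e})

/-- The matroid `M/e` obtained by contracting the element `e`, via `M/e = (M✶∖e)✶`. -/
def conElem (M : Matroid α) (e : α) : Matroid α := ((M✶) ↾ (M.E \ {e}))✶

/-- `N` is a minor of `M`: it is obtained from `M` by a sequence of single-element
deletions and contractions. -/
inductive MinorOfElem : Matroid α → Matroid α → Prop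
  | refl (M : Matroid α) : MinorOfElem M M
  | del {N M : Matroid α} (e : α) : MinorOfElem N M → e ∈ N.E → MinorOfElem (N.delElem e) M
  | con {N M : Matroid α} (e : α) : MinorOfElem N M → e ∈ N.E → MinorOfElem (N.conElem e) M

end Matroid

namespace Matroid

open Set

variable {α : Type*} {M : Matroid α} {X Y Z I J : Set α} {n : ℕ}

lemma rankOf_inter_ground (M : Matroid α) (X : Set α) :
    M.rankOf X = M.rankOf (X ∩ M.E) := by
  unfold rankOf; congr 1; ext n
  constructor
  · rintro ⟨I, hI, hIX, rfl⟩
    exact ⟨I, hI, subset_inter hIX hI.subset_ground, rfl⟩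
  · rintro ⟨I, hI, hIX, rfl⟩
    exact ⟨I, hI, hIX.trans inter_subset_left, rfl⟩

lemma ncard_le_rankOf (hE : M.E.Finite) (hI : M.Indep I) (hIX : I ⊆ X) :
    I.ncard ≤ M.rankOf X := by
  refine le_csSup ⟨M.E.ncard, ?_⟩ ⟨I, hI, hIX, rfl⟩
  rintro n ⟨J, hJ, hJX, rfl⟩
  exact Set.ncard_le_ncard hJ.subset_ground hE

lemma rankOf_le (h : ∀ I, M.Indep I → I ⊆ X → I.ncard ≤ n) : M.rankOf X ≤ n := by
  refine csSup_le ⟨0, ∅, M.empty_indep, empty_subset X, by simp⟩ ?_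
  rintro m ⟨I, hI, hIX, rfl⟩
  exact h I hI hIX

lemma exists_rankOf (M' : Matroid α) (hME : M'.E.Finite) (X : Set α) :
    ∃ I, M'.Indep I ∧ I ⊆ X ∧ I.ncard = M'.rankOf X := by
  have h := Nat.sSup_mem (s := {n | ∃ I, M'.Indep I ∧ I ⊆ X ∧ I.ncard = n})
    ⟨0, ∅, M'.empty_indep, empty_subset X, by simp⟩
    ⟨M'.E.ncard, by rintro n ⟨J, hJ, hJX, rfl⟩; exact Set.ncard_le_ncard hJ.subset_ground hME⟩
  exact h

lemma IsBasis'.rankOf_eq (hE : M.E.Finite) (hI : M.IsBasis' I X) : M.rankOf X = I.ncard := by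
  have hIfin : I.Finite := hE.subset hI.indep.subset_ground
  refine le_antisymm (rankOf_le fun J hJ hJX => ?_) (ncard_le_rankOf hE hI.indep hI.subset)
  obtain ⟨J', hJ', hJJ'⟩ := hJ.subset_isBasis'_of_subset hJX
  have hcard : J'.ncard = I.ncard := by
    have := hJ'.encard_eq_encard hI
    simp [Set.ncard, this]
  calc J.ncard ≤ J'.ncard := Set.ncard_le_ncard hJJ' (hE.subset hJ'.indep.subset_ground)
    _ = I.ncard := hcard

lemma rankOf_mono (hE : M.E.Finite) (hXY : X ⊆ Y) : M.rankOf X ≤ M.rankOf Y :=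
  rankOf_le fun I hI hIX => ncard_le_rankOf hE hI (hIX.trans hXY)

lemma rankOf_le_ncard (hX : X.Finite) : M.rankOf X ≤ X.ncard :=
  rankOf_le fun _ _ hIX => Set.ncard_le_ncard hIX hX

@[simp] lemma rankOf_empty (M : Matroid α) : M.rankOf (∅ : Set α) = 0 :=
  Nat.le_zero.mp (rankOf_le fun I _ hI => by simp [subset_empty_iff.mp hI])

lemma rankOf_union_le (hE : M.E.Finite) : M.rankOf (X ∪ Y) ≤ M.rankOf X + M.rankOf Y := by
  obtain ⟨I, hI, hIXY, hcard⟩ := exists_rankOf M hE (X ∪ Y)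
  rw [← hcard]
  have hIfin : I.Finite := hE.subset hI.subset_ground
  have : I.ncard = (I ∩ X).ncard + (I \ X).ncard := by
    rw [Set.ncard_inter_add_ncard_diff_eq_ncard I X hIfin]
  rw [this]
  have h1 : (I ∩ X).ncard ≤ M.rankOf X :=
    ncard_le_rankOf hE (hI.subset inter_subset_left) inter_subset_right
  have h2 : (I \ X).ncard ≤ M.rankOf Y :=
    ncard_le_rankOf hE (hI.subset diff_subset) fun x hx => (hIXY hx.1).elim (fun h => absurd h hx.2) id
  omega

lemma rankOf_submod (hE : M.E.Finite) (X Y : Set α) :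
    M.rankOf (X ∪ Y) + M.rankOf (X ∩ Y) ≤ M.rankOf X + M.rankOf Y := by
  obtain ⟨I, hI⟩ := M.exists_isBasis' (X ∩ Y)
  obtain ⟨J, hJ, hIJ⟩ := hI.indep.subset_isBasis'_of_subset (hI.subset.trans (inter_subset_left.trans subset_union_left))
  rw [hI.rankOf_eq hE, hJ.rankOf_eq hE]
  have hJfin : J.Finite := hE.subset hJ.indep.subset_ground
  have h1 : (J ∩ X).ncard ≤ M.rankOf X :=
    ncard_le_rankOf hE (hJ.indep.subset inter_subset_left) inter_subset_right
  have h2 : (J ∩ Y).ncard ≤ M.rankOf Y :=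
    ncard_le_rankOf hE (hJ.indep.subset inter_subset_left) inter_subset_right
  have hsum : (J ∩ X).ncard + (J ∩ Y).ncard = J.ncard + I.ncard := by
    have hu : (J ∩ X) ∪ (J ∩ Y) = J := by
      rw [← inter_union_distrib_left]
      exact inter_eq_self_of_subset_left hJ.subset
    have hIcard : ((J ∩ X) ∩ (J ∩ Y)).ncard = I.ncard := by
      have hi : (J ∩ X) ∩ (J ∩ Y) = J ∩ (X ∩ Y) := by ext x; simp; tauto
      rw [hi]
      have hsub : I ⊆ J ∩ (X ∩ Y) := subset_inter hIJ hI.subset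
      have hsub2 : J ∩ (X ∩ Y) ⊆ I := by
        by_contra hcon
        obtain ⟨x, hx, hxI⟩ := not_subset.mp hcon
        have : M.Indep (insert x I) := hJ.indep.subset (insert_subset hx.1 hIJ)
        have hxmem : insert x I ⊆ X ∩ Y := insert_subset hx.2 hI.subset
        have := hI.eq_of_subset_indep this (subset_insert x I) hxmem
        exact hxI (this ▸ mem_insert x I)
      rw [Set.Subset.antisymm hsub2 hsub]
    have := Set.ncard_union_add_ncard_inter (J ∩ X) (J ∩ Y) (hJfin.subset inter_subset_left)
      (hJfin.subset inter_subset_left)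
    rw [hu, hIcard] at this
    omega
  omega

lemma indep_iff_rankOf (hE : M.E.Finite) :
    M.Indep I ↔ I ⊆ M.E ∧ M.rankOf I = I.ncard := by
  constructor
  · intro hI
    refine ⟨hI.subset_ground, le_antisymm (rankOf_le_ncard (hE.subset hI.subset_ground))
      (ncard_le_rankOf hE hI subset_rfl)⟩
  · rintro ⟨hIE, hr⟩
    have hIfin : I.Finite := hE.subset hIE
    obtain ⟨J, hJ⟩ := M.exists_isBasis' I
    have hJI : J ⊆ I := hJ.subset
    have : I.ncard ≤ J.ncard := by rw [← hr, hJ.rankOf_eq hE]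
    rw [Set.eq_of_subset_of_ncard_le hJI this hIfin] at hJ
    exact hJ.indep

lemma eq_of_rankOf_eq {M₁ M₂ : Matroid α} (hE : M₁.E.Finite) (hg : M₁.E = M₂.E)
    (h : ∀ Z, Z ⊆ M₁.E → M₁.rankOf Z = M₂.rankOf Z) : M₁ = M₂ := by
  refine ext_indep hg fun I hI => ?_
  rw [indep_iff_rankOf hE, indep_iff_rankOf (hg ▸ hE), ← hg, h I hI]


lemma rankOf_restrict (M : Matroid α) (R Z : Set α) :
    (M ↾ R).rankOf Z = M.rankOf (Z ∩ R) := by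
  unfold rankOf; congr 1; ext n
  constructor
  · rintro ⟨I, hI, hIZ, rfl⟩
    rw [restrict_indep_iff] at hI
    exact ⟨I, hI.1, subset_inter hIZ hI.2, rfl⟩
  · rintro ⟨I, hI, hIZ, rfl⟩
    exact ⟨I, restrict_indep_iff.mpr ⟨hI, hIZ.trans inter_subset_right⟩,
      hIZ.trans inter_subset_left, rfl⟩

lemma rankOf_ground_base (hE : M.E.Finite) {B : Set α} (hB : M.IsBase B) :
    M.rankOf M.E = B.ncard :=
  (hB.isBasis_ground.isBasis').rankOf_eq hE

lemma rankOf_dual_add (hE : M.E.Finite) (hX : X ⊆ M.E) :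
    M✶.rankOf X + M.rankOf M.E = X.ncard + M.rankOf (M.E \ X) := by
  have hXfin : X.Finite := hE.subset hX
  have hdE : M✶.E.Finite := by simpa using hE
  refine le_antisymm ?_ ?_
  · obtain ⟨I, hI, hIX, hIcard⟩ := exists_rankOf M✶ hdE X
    obtain ⟨hIE, B, hB, hdisj⟩ := dual_indep_iff_exists'.mp hI
    have hBfin : B.Finite := hE.subset hB.subset_ground
    rw [← hIcard, rankOf_ground_base hE hB]
    have h1 : I.ncard ≤ (X \ B).ncard :=
      Set.ncard_le_ncard (fun x hx => ⟨hIX hx, fun hxB => hdisj.ne_of_mem hx hxB rfl⟩)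
        (hXfin.diff)
    have h2 : (B \ X).ncard ≤ M.rankOf (M.E \ X) :=
      ncard_le_rankOf hE (hB.indep.subset diff_subset)
        (fun x hx => ⟨hB.subset_ground hx.1, hx.2⟩)
    have e1 : (B ∩ X).ncard + (B \ X).ncard = B.ncard :=
      Set.ncard_inter_add_ncard_diff_eq_ncard B X hBfin
    have e2 : (X ∩ B).ncard + (X \ B).ncard = X.ncard :=
      Set.ncard_inter_add_ncard_diff_eq_ncard X B hXfin
    have e3 : (B ∩ X).ncard = (X ∩ B).ncard := by rw [inter_comm]
    omega
  · obtain ⟨I₀, hI₀⟩ := M.exists_isBasis' (M.E \ X)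
    obtain ⟨B, hB, hI₀B⟩ := hI₀.indep.exists_isBase_superset
    have hBfin : B.Finite := hE.subset hB.subset_ground
    rw [rankOf_ground_base hE hB, hI₀.rankOf_eq hE]
    have h1 : (X \ B).ncard ≤ M✶.rankOf X := by
      refine ncard_le_rankOf hdE ?_ diff_subset
      rw [dual_indep_iff_exists']
      exact ⟨diff_subset.trans hX, B, hB, disjoint_sdiff_left⟩
    have h2 : I₀.ncard ≤ (B \ X).ncard :=
      Set.ncard_le_ncard (fun x hx => ⟨hI₀B hx, (hI₀.subset hx).2⟩) (hBfin.diff)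
    have e1 : (B ∩ X).ncard + (B \ X).ncard = B.ncard :=
      Set.ncard_inter_add_ncard_diff_eq_ncard B X hBfin
    have e2 : (X ∩ B).ncard + (X \ B).ncard = X.ncard :=
      Set.ncard_inter_add_ncard_diff_eq_ncard X B hXfin
    have e3 : (B ∩ X).ncard = (X ∩ B).ncard := by rw [inter_comm]
    omega

@[simp] lemma delElem_ground (M : Matroid α) (e : α) : (M.delElem e).E = M.E \ {e} := rfl

@[simp] lemma conElem_ground (M : Matroid α) (e : α) : (M.conElem e).E = M.E \ {e} := rfl

lemma rankOf_delElem (M : Matroid α) (e : α) (Z : Set α) :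
    (M.delElem e).rankOf Z = M.rankOf (Z ∩ (M.E \ {e})) :=
  rankOf_restrict M _ Z

lemma rankOf_conElem_add (hE : M.E.Finite) {e : α} (he : e ∈ M.E) (hZ : Z ⊆ M.E \ {e}) :
    (M.conElem e).rankOf Z + M.rankOf {e} = M.rankOf (Z ∪ {e}) := by
  set G : Set α := M.E \ {e} with hG
  have hGfin : G.Finite := hE.diff
  have hDE : (M✶ ↾ G).E.Finite := by simpa [restrict_ground_eq] using hGfin
  have hZG : Z ⊆ (M✶ ↾ G).E := by simpa [restrict_ground_eq] using hZ
  have key := rankOf_dual_add (M := M✶ ↾ G) hDE hZG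
  -- rewrite restriction ranks
  rw [restrict_ground_eq] at key
  rw [rankOf_restrict, rankOf_restrict] at key
  have hZinter : Z ∩ G = Z := inter_eq_self_of_subset_left hZ
  have hGG : G ∩ G = G := inter_self G
  have hdiffG : (G \ Z) ∩ G = G \ Z := inter_eq_self_of_subset_left diff_subset
  rw [hGG, hdiffG] at key
  -- dual rank identities in M
  have k1 : M✶.rankOf G + M.rankOf M.E = G.ncard + M.rankOf {e} := by
    have := rankOf_dual_add hE (X := G) diff_subset
    rwa [show M.E \ G = {e} by rw [hG, diff_diff_cancel_left (singleton_subset_iff.mpr he)]] at this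
  have k2 : M✶.rankOf (G \ Z) + M.rankOf M.E = (G \ Z).ncard + M.rankOf (Z ∪ {e}) := by
    have := rankOf_dual_add hE (X := G \ Z) (diff_subset.trans diff_subset)
    rwa [show M.E \ (G \ Z) = Z ∪ {e} by
      rw [hG, diff_diff_right, diff_diff_cancel_left (singleton_subset_iff.mpr he),
        inter_eq_self_of_subset_right (hZ.trans diff_subset), union_comm]] at this
  have e1 : Z.ncard + (G \ Z).ncard = G.ncard := by
    rw [add_comm, Set.ncard_diff_add_ncard_of_subset hZ hGfin]
  -- conclusion
  have hcon : (M.conElem e).rankOf Z = (M✶ ↾ G)✶.rankOf Z := rfl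
  omega

lemma IsSep.compl (h : M.IsSep X) : M.IsSep (M.E \ X) :=
  ⟨diff_subset, by rw [diff_diff_cancel_left h.1, add_comm]; exact h.2⟩

lemma IsConn.eq_empty_or_ground (hconn : M.IsConn) (hsep : M.IsSep X) :
    X = ∅ ∨ X = M.E := by
  by_contra hcon
  push_neg at hcon
  exact hconn ⟨X, hsep, hcon.1, hcon.2⟩

lemma IsSep.rankOf_add (hE : M.E.Finite) {S : Set α} (hS : M.IsSep S) (hZ : Z ⊆ M.E) :
    M.rankOf Z = M.rankOf (Z ∩ S) + M.rankOf (Z \ S) := by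
  obtain ⟨hSE, hsep⟩ := hS
  refine le_antisymm ?_ ?_
  · have : Z = (Z ∩ S) ∪ (Z \ S) := (inter_union_diff Z S).symm
    calc M.rankOf Z = M.rankOf ((Z ∩ S) ∪ (Z \ S)) := by rw [← this]
      _ ≤ _ := rankOf_union_le hE
  · have a := rankOf_submod hE Z S
    have b := rankOf_submod hE (Z ∪ S) (M.E \ S)
    have e1 : (Z ∪ S) ∪ (M.E \ S) = M.E := by
      apply Subset.antisymm (union_subset (union_subset hZ hSE) diff_subset)
      intro x hx
      by_cases hxS : x ∈ S
      · exact Or.inl (Or.inr hxS)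
      · exact Or.inr ⟨hx, hxS⟩
    have e2 : (Z ∪ S) ∩ (M.E \ S) = Z \ S := by
      ext x
      simp only [mem_inter_iff, mem_union, mem_diff]
      constructor
      · rintro ⟨hZS | hxS, hxE, hnS⟩
        · exact ⟨hZS, hnS⟩
        · exact absurd hxS hnS
      · rintro ⟨hxZ, hnS⟩
        exact ⟨Or.inl hxZ, hZ hxZ, hnS⟩
    rw [e1, e2] at b
    have mono : M.rankOf (Z \ S) ≤ M.rankOf Z := rankOf_mono hE diff_subset
    omega

lemma IsConn.rankOf_singleton (hE : M.E.Finite) (hconn : M.IsConn) {x y : α}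
    (hx : x ∈ M.E) (hy : y ∈ M.E) (hxy : y ≠ x) : M.rankOf {x} = 1 := by
  have h1 : M.rankOf {x} ≤ 1 := by
    simpa using rankOf_le_ncard (M := M) (finite_singleton x)
  have hcover : M.rankOf M.E ≤ M.rankOf {x} + M.rankOf (M.E \ {x}) := by
    calc M.rankOf M.E = M.rankOf ({x} ∪ (M.E \ {x})) := by
          rw [union_diff_cancel (singleton_subset_iff.mpr hx)]
      _ ≤ _ := rankOf_union_le hE
  have h0 : M.rankOf {x} ≠ 0 := by
    intro h0
    have hsep : M.IsSep {x} := by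
      refine ⟨singleton_subset_iff.mpr hx, ?_⟩
      have mono : M.rankOf (M.E \ {x}) ≤ M.rankOf M.E := rankOf_mono hE diff_subset
      omega
    rcases hconn.eq_empty_or_ground hsep with h | h
    · exact (singleton_ne_empty x) h
    · rw [← h] at hy
      exact hxy (mem_singleton_iff.mp hy)
  omega

lemma IsConn.rankOf_diff_singleton (hE : M.E.Finite) (hconn : M.IsConn) {x y : α}
    (hx : x ∈ M.E) (hy : y ∈ M.E) (hxy : y ≠ x) :
    M.rankOf (M.E \ {x}) = M.rankOf M.E := by
  have h1 : M.rankOf {x} = 1 := hconn.rankOf_singleton hE hx hy hxy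
  have mono : M.rankOf (M.E \ {x}) ≤ M.rankOf M.E := rankOf_mono hE diff_subset
  have hcover : M.rankOf M.E ≤ M.rankOf {x} + M.rankOf (M.E \ {x}) := by
    calc M.rankOf M.E = M.rankOf ({x} ∪ (M.E \ {x})) := by
          rw [union_diff_cancel (singleton_subset_iff.mpr hx)]
      _ ≤ _ := rankOf_union_le hE
  by_contra hne
  have hsep : M.IsSep {x} := ⟨singleton_subset_iff.mpr hx, by omega⟩
  rcases hconn.eq_empty_or_ground hsep with h | h
  · exact (singleton_ne_empty x) h
  · rw [← h] at hy
    exact hxy (mem_singleton_iff.mp hy)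

lemma isSep_dual_iff (hE : M.E.Finite) : M✶.IsSep X ↔ M.IsSep X := by
  have key : X ⊆ M.E →
      (M✶.rankOf X + M✶.rankOf (M.E \ X) = M✶.rankOf M.E ↔
        M.rankOf X + M.rankOf (M.E \ X) = M.rankOf M.E) := by
    intro hX
    have d1 := rankOf_dual_add hE hX
    have d2 := rankOf_dual_add hE (diff_subset : M.E \ X ⊆ M.E)
    rw [diff_diff_cancel_left hX] at d2
    have d3 := rankOf_dual_add hE (subset_refl M.E)
    rw [diff_self, rankOf_empty] at d3
    have e0 := Set.ncard_diff_add_ncard_of_subset hX hE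
    omega
  unfold IsSep
  rw [dual_ground]
  constructor <;> rintro ⟨hX, hr⟩ <;> exact ⟨hX, by rw [← key hX] at *; tauto⟩

lemma IsConn.dual (hE : M.E.Finite) (hconn : M.IsConn) : M✶.IsConn := by
  rintro ⟨X, hsep, hne, hXE⟩
  exact hconn ⟨X, (isSep_dual_iff hE).mp hsep, hne, by simpa using hXE⟩


lemma MinorOfElem.ground_subset {N M : Matroid α} (h : MinorOfElem N M) : N.E ⊆ M.E := by
  induction h with
  | refl M => exact subset_rfl
  | del f h hf ih => exact (diff_subset.trans ih : _)
  | con f h hf ih => exact (diff_subset.trans ih : _)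

lemma MinorOfElem.trans {N K M : Matroid α} (h1 : MinorOfElem N K) (h2 : MinorOfElem K M) :
    MinorOfElem N M := by
  induction h1 with
  | refl => exact h2
  | del f h hf ih => exact MinorOfElem.del f (ih h2) hf
  | con f h hf ih => exact MinorOfElem.con f (ih h2) hf

lemma IsSep.delElem_sep (hE : M.E.Finite) {S : Set α} (hS : M.IsSep S) (f : α) :
    (M.delElem f).IsSep (S \ {f}) := by
  have hSE := hS.1
  have hsep2 := hS.2
  refine ⟨by rw [delElem_ground]; exact diff_subset_diff_left hSE, ?_⟩
  rw [delElem_ground, rankOf_delElem, rankOf_delElem, rankOf_delElem]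
  have e1 : (S \ {f}) ∩ (M.E \ {f}) = S \ {f} :=
    inter_eq_self_of_subset_left (diff_subset_diff_left hSE)
  have e2 : ((M.E \ {f}) \ (S \ {f})) ∩ (M.E \ {f}) = (M.E \ S) \ {f} := by
    ext x; simp only [mem_inter_iff, mem_diff, mem_singleton_iff]; tauto
  have e3 : (M.E \ {f}) ∩ (M.E \ {f}) = M.E \ {f} := inter_self _
  rw [e1, e2, e3]
  have hadd := hS.rankOf_add hE (diff_subset : M.E \ {f} ⊆ M.E)
  have e4 : (M.E \ {f}) ∩ S = S \ {f} := by
    ext x; simp only [mem_inter_iff, mem_diff, mem_singleton_iff]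
    exact ⟨fun h => ⟨h.2, h.1.2⟩, fun h => ⟨⟨hSE h.1, h.2⟩, h.1⟩⟩
  have e5 : (M.E \ {f}) \ S = (M.E \ S) \ {f} := by
    ext x; simp only [mem_diff, mem_singleton_iff]; tauto
  rw [e4, e5] at hadd
  omega

lemma IsSep.conElem_sep (hE : M.E.Finite) {S : Set α} (hS : M.IsSep S) {f : α}
    (hf : f ∈ M.E) : (M.conElem f).IsSep (S \ {f}) := by
  have hSE := hS.1
  refine ⟨by rw [conElem_ground]; exact diff_subset_diff_left hSE, ?_⟩
  rw [conElem_ground]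
  have e2 : (M.E \ {f}) \ (S \ {f}) = (M.E \ S) \ {f} := by
    ext x; simp only [mem_diff, mem_singleton_iff]; tauto
  rw [e2]
  have k1 := rankOf_conElem_add hE hf (diff_subset_diff_left hSE : S \ {f} ⊆ M.E \ {f})
  have k2 := rankOf_conElem_add hE hf
    (diff_subset_diff_left (diff_subset : M.E \ S ⊆ M.E) : (M.E \ S) \ {f} ⊆ M.E \ {f})
  have k3 := rankOf_conElem_add hE hf (subset_refl (M.E \ {f}))
  rw [show (M.E \ {f}) ∪ {f} = M.E by
    rw [diff_union_self, union_eq_self_of_subset_right (singleton_subset_iff.mpr hf)]] at k3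
  by_cases hfS : f ∈ S
  · rw [show (S \ {f}) ∪ {f} = S by
      rw [diff_union_self, union_eq_self_of_subset_right (singleton_subset_iff.mpr hfS)]] at k1
    rw [show ((M.E \ S) \ {f}) ∪ {f} = (M.E \ S) ∪ {f} by
      rw [diff_union_self]] at k2
    have hadd := hS.rankOf_add hE
      (union_subset diff_subset (singleton_subset_iff.mpr hf) : (M.E \ S) ∪ {f} ⊆ M.E)
    have e3 : ((M.E \ S) ∪ {f}) ∩ S = {f} := by
      ext x; simp only [mem_inter_iff, mem_union, mem_diff, mem_singleton_iff]
      constructor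
      · rintro ⟨hx | rfl, hxS⟩; · exact absurd hxS hx.2
        · rfl
      · rintro rfl; exact ⟨Or.inr rfl, hfS⟩
    have e4 : ((M.E \ S) ∪ {f}) \ S = M.E \ S := by
      ext x; simp only [mem_union, mem_diff, mem_singleton_iff]
      constructor
      · rintro ⟨hx | rfl, hxS⟩; · exact hx
        · exact absurd hfS hxS
      · rintro ⟨hxE, hxS⟩; exact ⟨Or.inl ⟨hxE, hxS⟩, hxS⟩
    rw [e3, e4] at hadd
    have hsep := hS.2
    omega
  · rw [show (S \ {f}) ∪ {f} = S ∪ {f} by rw [diff_union_self]] at k1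
    rw [show ((M.E \ S) \ {f}) ∪ {f} = M.E \ S by
      rw [diff_union_self]
      exact union_eq_self_of_subset_right (singleton_subset_iff.mpr ⟨hf, hfS⟩)] at k2
    have hadd := hS.rankOf_add hE
      (union_subset hSE (singleton_subset_iff.mpr hf) : S ∪ {f} ⊆ M.E)
    have e3 : (S ∪ {f}) ∩ S = S := by
      rw [union_inter_distrib_right, inter_self]
      apply union_eq_self_of_subset_right inter_subset_right
    have e4 : (S ∪ {f}) \ S = {f} := by
      ext x; simp only [mem_union, mem_diff, mem_singleton_iff]
      constructor
      · rintro ⟨h | h, hxS⟩; exacts [absurd h hxS, h]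
      · rintro rfl; exact ⟨Or.inr rfl, hfS⟩
    rw [e3, e4] at hadd
    have hsep := hS.2
    omega

lemma MinorOfElem.isSep_inter {S : Set α} {N M : Matroid α} (hm : MinorOfElem N M) :
    M.E.Finite → M.IsSep S → N.IsSep (S ∩ N.E) := by
  induction hm with
  | refl M =>
    intro hE hS
    rwa [inter_eq_self_of_subset_left hS.1]
  | @del N' M' f h hf ih =>
    intro hE hS
    have hN'fin : N'.E.Finite := hE.subset h.ground_subset
    have := (ih hE hS).delElem_sep hN'fin f
    rwa [show (S ∩ N'.E) \ {f} = S ∩ (N'.delElem f).E by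
      rw [delElem_ground]; ext x; simp only [mem_inter_iff, mem_diff, mem_singleton_iff]; tauto]
      at this
  | @con N' M' f h hf ih =>
    intro hE hS
    have hN'fin : N'.E.Finite := hE.subset h.ground_subset
    have := (ih hE hS).conElem_sep hN'fin hf
    rwa [show (S ∩ N'.E) \ {f} = S ∩ (N'.conElem f).E by
      rw [conElem_ground]; ext x; simp only [mem_inter_iff, mem_diff, mem_singleton_iff]; tauto]
      at this

lemma delElem_comm (M : Matroid α) (e f : α) :
    (M.delElem e).delElem f = (M.delElem f).delElem e := by
  unfold delElem
  rw [restrict_ground_eq, restrict_ground_eq, restrict_restrict_eq _ diff_subset,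
    restrict_restrict_eq _ diff_subset]
  congr 1
  ext x; simp only [mem_diff, mem_singleton_iff]; tauto

lemma conElem_delElem (hE : M.E.Finite) {e f : α} (he : e ∈ M.E) (hf : f ∈ M.E)
    (hef : e ≠ f) : (M.conElem e).delElem f = (M.delElem f).conElem e := by
  have hEfin' : ((M.conElem e).delElem f).E.Finite := by
    rw [delElem_ground, conElem_ground]; exact (hE.diff).diff
  refine eq_of_rankOf_eq hEfin' ?_ ?_
  · rw [delElem_ground, conElem_ground, conElem_ground, delElem_ground]
    ext x; simp only [mem_diff, mem_singleton_iff]; tauto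
  · intro Z hZ
    rw [delElem_ground, conElem_ground] at hZ
    have hZe : Z ⊆ M.E \ {e} := fun x hx => (hZ hx).1
    have hZf : ∀ x ∈ Z, x ≠ f := fun x hx => (hZ hx).2
    -- LHS
    have l1 : ((M.conElem e).delElem f).rankOf Z = (M.conElem e).rankOf Z := by
      have hh : Z ∩ ((M.conElem e).E \ {f}) = Z := by
        rw [conElem_ground]; exact inter_eq_self_of_subset_left hZ
      rw [rankOf_delElem, hh]
    have l2 := rankOf_conElem_add hE he hZe
    -- RHS
    have hEdel : (M.delElem f).E.Finite := by rw [delElem_ground]; exact hE.diff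
    have he' : e ∈ (M.delElem f).E := by rw [delElem_ground]; exact ⟨he, hef⟩
    have hZ' : Z ⊆ (M.delElem f).E \ {e} := by
      rw [delElem_ground]
      intro x hx
      exact ⟨⟨(hZ hx).1.1, hZf x hx⟩, (hZ hx).1.2⟩
    have r1 := rankOf_conElem_add hEdel he' hZ'
    have r2 : (M.delElem f).rankOf {e} = M.rankOf {e} := by
      rw [rankOf_delElem]
      congr 1
      exact inter_eq_self_of_subset_left (singleton_subset_iff.mpr ⟨he, hef⟩)
    have r3 : (M.delElem f).rankOf (Z ∪ {e}) = M.rankOf (Z ∪ {e}) := by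
      rw [rankOf_delElem]
      congr 1
      refine inter_eq_self_of_subset_left
        (union_subset (fun x hx => ⟨(hZ hx).1.1, hZf x hx⟩)
          (singleton_subset_iff.mpr ⟨he, hef⟩))
    rw [r2, r3] at r1
    omega

lemma conElem_comm (hE : M.E.Finite) {e f : α} (he : e ∈ M.E) (hf : f ∈ M.E)
    (hef : e ≠ f) : (M.conElem e).conElem f = (M.conElem f).conElem e := by
  have key : ∀ g h : α, g ∈ M.E → h ∈ M.E → g ≠ h → ∀ Z, Z ⊆ (M.E \ {g}) \ {h} →
      ((M.conElem g).conElem h).rankOf Z + M.rankOf ({g} ∪ {h}) =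
        M.rankOf (Z ∪ ({g} ∪ {h})) := by
    intro g h hg hh hgh Z hZ
    have hEg : (M.conElem g).E.Finite := by rw [conElem_ground]; exact hE.diff
    have hh' : h ∈ (M.conElem g).E := by rw [conElem_ground]; exact ⟨hh, Ne.symm hgh⟩
    have hZ' : Z ⊆ (M.conElem g).E \ {h} := by rw [conElem_ground]; exact hZ
    have k1 := rankOf_conElem_add hEg hh' hZ'
    have k2 := rankOf_conElem_add hE hg
      (show ({h} : Set α) ⊆ M.E \ {g} from singleton_subset_iff.mpr ⟨hh, Ne.symm hgh⟩)
    have k3 := rankOf_conElem_add hE hg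
      (show Z ∪ {h} ⊆ M.E \ {g} from union_subset (fun x hx => (hZ hx).1)
        (singleton_subset_iff.mpr ⟨hh, Ne.symm hgh⟩))
    have e1 : ({h} : Set α) ∪ {g} = {g} ∪ {h} := union_comm _ _
    have e2 : (Z ∪ {h}) ∪ {g} = Z ∪ ({g} ∪ {h}) := by
      rw [union_assoc, union_comm {h} {g}]
    rw [e1] at k2
    rw [e2] at k3
    omega
  have hEfin' : ((M.conElem e).conElem f).E.Finite := by
    rw [conElem_ground, conElem_ground]; exact (hE.diff).diff
  refine eq_of_rankOf_eq hEfin' ?_ ?_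
  · rw [conElem_ground, conElem_ground, conElem_ground, conElem_ground]
    ext x; simp only [mem_diff, mem_singleton_iff]; tauto
  · intro Z hZ
    rw [conElem_ground, conElem_ground] at hZ
    have h1 := key e f he hf hef Z hZ
    have h2 := key f e hf he (Ne.symm hef) Z
      (fun x hx => ⟨⟨(hZ hx).1.1, (hZ hx).2⟩, (hZ hx).1.2⟩)
    rw [show ({f} : Set α) ∪ {e} = {e} ∪ {f} from union_comm _ _] at h2
    omega

lemma MinorOfElem.delElem_minor {N M : Matroid α} (hm : MinorOfElem N M) :
    M.E.Finite → ∀ f ∈ N.E, MinorOfElem (N.delElem f) (M.delElem f) := by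
  induction hm with
  | refl M => intro hE f hf; exact MinorOfElem.refl _
  | @del N' M' g h hg ih =>
    intro hE f hf
    rw [delElem_ground] at hf
    have h1 := ih hE f hf.1
    have : MinorOfElem ((N'.delElem f).delElem g) (M'.delElem f) :=
      MinorOfElem.del g h1 (by rw [delElem_ground]; exact ⟨hg, fun hgf => hf.2 (hgf ▸ rfl)⟩)
    rwa [delElem_comm] at this
  | @con N' M' g h hg ih =>
    intro hE f hf
    rw [conElem_ground] at hf
    have hN'fin : N'.E.Finite := hE.subset h.ground_subset
    have h1 := ih hE f hf.1
    have : MinorOfElem ((N'.delElem f).conElem g) (M'.delElem f) :=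
      MinorOfElem.con g h1 (by rw [delElem_ground]; exact ⟨hg, fun hgf => hf.2 (hgf ▸ rfl)⟩)
    rwa [← conElem_delElem hN'fin hg hf.1 (fun hgf => hf.2 (hgf ▸ rfl))] at this

lemma MinorOfElem.conElem_minor {N M : Matroid α} (hm : MinorOfElem N M) :
    M.E.Finite → ∀ f ∈ N.E, MinorOfElem (N.conElem f) (M.conElem f) := by
  induction hm with
  | refl M => intro hE f hf; exact MinorOfElem.refl _
  | @del N' M' g h hg ih =>
    intro hE f hf
    rw [delElem_ground] at hf
    have hN'fin : N'.E.Finite := hE.subset h.ground_subset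
    have h1 := ih hE f hf.1
    have : MinorOfElem ((N'.conElem f).delElem g) (M'.conElem f) :=
      MinorOfElem.del g h1 (by rw [conElem_ground]; exact ⟨hg, fun hgf => hf.2 (hgf ▸ rfl)⟩)
    rwa [conElem_delElem hN'fin hf.1 hg (fun hfg => hf.2 hfg)] at this
  | @con N' M' g h hg ih =>
    intro hE f hf
    rw [conElem_ground] at hf
    have hN'fin : N'.E.Finite := hE.subset h.ground_subset
    have h1 := ih hE f hf.1
    have : MinorOfElem ((N'.conElem f).conElem g) (M'.conElem f) :=
      MinorOfElem.con g h1 (by rw [conElem_ground]; exact ⟨hg, fun hgf => hf.2 (hgf ▸ rfl)⟩)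
    rwa [conElem_comm hN'fin hf.1 hg (fun hfg => hf.2 (hfg ▸ rfl))] at this

lemma MinorOfElem.del_or_con {N M : Matroid α} (hm : MinorOfElem N M) :
    M.E.Finite → ∀ f, f ∉ N.E →
      MinorOfElem N (M.delElem f) ∨ MinorOfElem N (M.conElem f) ∨ f ∉ M.E := by
  induction hm with
  | refl M => intro hE f hf; exact Or.inr (Or.inr hf)
  | @del N' M' g h hg ih =>
    intro hE f hf
    rw [delElem_ground] at hf
    by_cases hfg : f = g
    · subst hfg
      by_cases hfM : f ∈ M'.E
      · exact Or.inl (h.delElem_minor hE f hg)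
      · exact Or.inr (Or.inr hfM)
    · have hf' : f ∉ N'.E := fun hmem => hf ⟨hmem, hfg⟩
      rcases ih hE f hf' with h1 | h1 | h1
      · exact Or.inl (MinorOfElem.del g h1 hg)
      · exact Or.inr (Or.inl (MinorOfElem.del g h1 hg))
      · exact Or.inr (Or.inr h1)
  | @con N' M' g h hg ih =>
    intro hE f hf
    rw [conElem_ground] at hf
    by_cases hfg : f = g
    · subst hfg
      by_cases hfM : f ∈ M'.E
      · exact Or.inr (Or.inl (h.conElem_minor hE f hg))
      · exact Or.inr (Or.inr hfM)
    · have hf' : f ∉ N'.E := fun hmem => hf ⟨hmem, hfg⟩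
      rcases ih hE f hf' with h1 | h1 | h1
      · exact Or.inl (MinorOfElem.con g h1 hg)
      · exact Or.inr (Or.inl (MinorOfElem.con g h1 hg))
      · exact Or.inr (Or.inr h1)

lemma restrict_diff_minor (hE : M.E.Finite) {D : Set α} (hD : D ⊆ M.E) :
    MinorOfElem (M ↾ (M.E \ D)) M := by
  have key : ∀ D' : Set α, D'.Finite → D' ⊆ M.E → MinorOfElem (M ↾ (M.E \ D')) M := by
    intro D' hD'fin
    refine Set.Finite.induction_on
      (motive := fun D' _ => D' ⊆ M.E → MinorOfElem (M ↾ (M.E \ D')) M) D' hD'fin (fun _ => ?_) ?_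
    · rw [diff_empty, restrict_ground_eq_self]
      exact MinorOfElem.refl M
    · intro a D'' haD'' hD''fin ih hsub
      have h1 := ih ((subset_insert a D'').trans hsub)
      have ha : a ∈ M.E := hsub (mem_insert a D'')
      have heq : M ↾ (M.E \ insert a D'') = (M ↾ (M.E \ D'')).delElem a := by
        unfold delElem
        rw [restrict_ground_eq, restrict_restrict_eq _ diff_subset]
        congr 1
        ext x
        simp only [mem_diff, mem_singleton_iff, mem_insert_iff]
        tauto
      rw [heq]
      exact MinorOfElem.del a h1 ⟨ha, haD''⟩
  exact key D (hE.subset hD) hD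

lemma MinorOfElem.restrict_sep {N M : Matroid α} (hm : MinorOfElem N M) :
    M.E.Finite → ∀ S, M.IsSep S →
      MinorOfElem (N ↾ (N.E \ S)) (M ↾ (M.E \ S)) := by
  induction hm with
  | refl M => intro hE S hS; exact MinorOfElem.refl _
  | @del N' M' f h hf ih =>
    intro hE S hS
    have hbase := ih hE S hS
    by_cases hfS : f ∈ S
    · have heq : (N'.delElem f) ↾ ((N'.delElem f).E \ S) = N' ↾ (N'.E \ S) := by
        unfold delElem
        rw [restrict_ground_eq, restrict_restrict_eq _ diff_subset]
        congr 1
        ext x; simp only [mem_diff, mem_singleton_iff]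
        constructor
        · rintro ⟨⟨h1, _⟩, h2⟩; exact ⟨h1, h2⟩
        · rintro ⟨h1, h2⟩; exact ⟨⟨h1, fun hxf => h2 (hxf ▸ hfS)⟩, h2⟩
      rw [heq]; exact hbase
    · have heq : (N'.delElem f) ↾ ((N'.delElem f).E \ S) = (N' ↾ (N'.E \ S)).delElem f := by
        unfold delElem
        rw [restrict_ground_eq, restrict_ground_eq, restrict_restrict_eq _ diff_subset,
          restrict_restrict_eq _ diff_subset]
        congr 1
        ext x; simp only [mem_diff, mem_singleton_iff]; tauto
      rw [heq]
      exact MinorOfElem.del f hbase ⟨hf, hfS⟩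
  | @con N' M' f h hf ih =>
    intro hE S hS
    have hbase := ih hE S hS
    have hN'fin : N'.E.Finite := hE.subset h.ground_subset
    have hsep' : N'.IsSep (S ∩ N'.E) := h.isSep_inter hE hS
    by_cases hfS : f ∈ S
    · have heq : (N'.conElem f) ↾ ((N'.conElem f).E \ S) = N' ↾ (N'.E \ S) := by
        have hgr : (N'.conElem f).E \ S = N'.E \ S := by
          rw [conElem_ground]
          ext x; simp only [mem_diff, mem_singleton_iff]
          constructor
          · rintro ⟨⟨h1, _⟩, h2⟩; exact ⟨h1, h2⟩
          · rintro ⟨h1, h2⟩; exact ⟨⟨h1, fun hxf => h2 (hxf ▸ hfS)⟩, h2⟩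
        rw [hgr]
        have hWfin : ((N'.conElem f) ↾ (N'.E \ S)).E.Finite := by
          rw [restrict_ground_eq]; exact hN'fin.diff
        refine eq_of_rankOf_eq hWfin (by rw [restrict_ground_eq, restrict_ground_eq]) ?_
        intro Z hZ
        rw [restrict_ground_eq] at hZ
        rw [rankOf_restrict, rankOf_restrict, inter_eq_self_of_subset_left hZ]
        have hZf : Z ⊆ N'.E \ {f} := fun x hx =>
          ⟨(hZ hx).1, fun hxf => (hZ hx).2 (mem_singleton_iff.mp hxf ▸ hfS)⟩
        have k1 := rankOf_conElem_add hN'fin hf hZf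
        have hadd := hsep'.rankOf_add hN'fin
          (union_subset (hZ.trans diff_subset) (singleton_subset_iff.mpr hf) :
            Z ∪ {f} ⊆ N'.E)
        have e3 : (Z ∪ {f}) ∩ (S ∩ N'.E) = {f} := by
          ext x
          simp only [mem_inter_iff, mem_union, mem_singleton_iff]
          constructor
          · rintro ⟨hx | rfl, hxS, _⟩
            · exact absurd hxS (hZ hx).2
            · rfl
          · rintro rfl; exact ⟨Or.inr rfl, hfS, hf⟩
        have e4 : (Z ∪ {f}) \ (S ∩ N'.E) = Z := by
          ext x
          simp only [mem_diff, mem_union, mem_singleton_iff, mem_inter_iff, not_and]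
          constructor
          · rintro ⟨hx | rfl, h2⟩
            · exact hx
            · exact absurd hfS (fun h => h2 h hf)
          · intro hx
            exact ⟨Or.inl hx, fun hxS => absurd hxS (hZ hx).2⟩
        rw [e3, e4] at hadd
        omega
      rw [heq]; exact hbase
    · have heq : (N'.conElem f) ↾ ((N'.conElem f).E \ S) = (N' ↾ (N'.E \ S)).conElem f := by
        have hWfin : ((N'.conElem f) ↾ ((N'.conElem f).E \ S)).E.Finite := by
          rw [restrict_ground_eq, conElem_ground]; exact (hN'fin.diff).diff
        refine eq_of_rankOf_eq hWfin ?_ ?_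
        · rw [restrict_ground_eq, conElem_ground, conElem_ground, restrict_ground_eq]
          ext x; simp only [mem_diff, mem_singleton_iff]; tauto
        · intro Z hZ
          rw [restrict_ground_eq, conElem_ground] at hZ
          have hZN : Z ⊆ N'.E \ {f} := hZ.trans diff_subset
          have hZS : ∀ x ∈ Z, x ∉ S := fun x hx => (hZ hx).2
          rw [rankOf_restrict, inter_eq_self_of_subset_left (by rwa [conElem_ground])]
          have k1 := rankOf_conElem_add hN'fin hf hZN
          set M₁ : Matroid α := N' ↾ (N'.E \ S) with hM₁
          have hM₁fin : M₁.E.Finite := by rw [hM₁, restrict_ground_eq]; exact hN'fin.diff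
          have hfM₁ : f ∈ M₁.E := by rw [hM₁, restrict_ground_eq]; exact ⟨hf, hfS⟩
          have hZM₁ : Z ⊆ M₁.E \ {f} := by
            rw [hM₁, restrict_ground_eq]
            intro x hx
            exact ⟨⟨(hZN hx).1, hZS x hx⟩, (hZN hx).2⟩
          have k2 := rankOf_conElem_add hM₁fin hfM₁ hZM₁
          have r1 : M₁.rankOf {f} = N'.rankOf {f} := by
            rw [hM₁, rankOf_restrict]
            congr 1
            exact inter_eq_self_of_subset_left (singleton_subset_iff.mpr ⟨hf, hfS⟩)
          have r2 : M₁.rankOf (Z ∪ {f}) = N'.rankOf (Z ∪ {f}) := by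
            rw [hM₁, rankOf_restrict]
            congr 1
            refine inter_eq_self_of_subset_left (union_subset ?_ ?_)
            · intro x hx; exact ⟨(hZN hx).1, hZS x hx⟩
            · exact singleton_subset_iff.mpr ⟨hf, hfS⟩
          rw [r1, r2] at k2
          omega
      rw [heq]
      exact MinorOfElem.con f hbase ⟨hf, hfS⟩

lemma dual_delElem (N : Matroid α) (f : α) : (N.delElem f)✶ = N✶.conElem f := by
  unfold conElem delElem
  rw [dual_dual, dual_ground]

lemma dual_conElem (N : Matroid α) (f : α) : (N.conElem f)✶ = N✶.delElem f := by
  unfold conElem delElem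
  rw [dual_dual, dual_ground]

lemma MinorOfElem.dual {N M : Matroid α} (hm : MinorOfElem N M) :
    MinorOfElem N✶ M✶ := by
  induction hm with
  | refl M => exact MinorOfElem.refl _
  | @del N' M' f h hf ih =>
    rw [dual_delElem]
    exact MinorOfElem.con f ih (by rwa [dual_ground])
  | @con N' M' f h hf ih =>
    rw [dual_conElem]
    exact MinorOfElem.del f ih (by rwa [dual_ground])

lemma cross_empty (hE : M.E.Finite) (hconn : M.IsConn) {e : α} (he : e ∈ M.E)
    {A B S C : Set α}
    (hA : A ⊆ M.E \ {e}) (hB : B = (M.E \ {e}) \ A)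
    (hS : S ⊆ M.E \ {e}) (hC : C = (M.E \ {e}) \ S)
    (hBe : M.rankOf (B ∪ {e}) = M.rankOf B)
    (hcross : M.rankOf (A ∩ S) + M.rankOf (B ∩ S) = M.rankOf S)
    (hsc : M.rankOf S + M.rankOf C = M.rankOf M.E) :
    A ∩ S = ∅ := by
  subst hB
  subst hC
  set B : Set α := (M.E \ {e}) \ A with hB
  set C : Set α := (M.E \ {e}) \ S with hC
  set W := A ∩ S with hW
  have hWE : W ⊆ M.E := fun x hx => (hA hx.1).1
  have hBE : B ⊆ M.E \ {e} := diff_subset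
  have hCE : C ⊆ M.E \ {e} := diff_subset
  set Z : Set α := (B ∩ S) ∪ C with hZ
  have hZE : Z ⊆ M.E \ {e} := union_subset (inter_subset_left.trans hBE) hCE
  have hBZ : B ⊆ Z := by
    intro x hx
    by_cases hxS : x ∈ S
    · exact Or.inl ⟨hx, hxS⟩
    · exact Or.inr ⟨hBE hx, hxS⟩
  have hcompl : M.E \ W = Z ∪ {e} := by
    ext x
    constructor
    · rintro ⟨hxE, hxW⟩
      by_cases hxe : x = e
      · exact Or.inr (mem_singleton_iff.mpr hxe)
      · by_cases hxS : x ∈ S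
        · by_cases hxA : x ∈ A
          · exact absurd ⟨hxA, hxS⟩ hxW
          · exact Or.inl (Or.inl ⟨⟨⟨hxE, hxe⟩, hxA⟩, hxS⟩)
        · exact Or.inl (Or.inr ⟨⟨hxE, hxe⟩, hxS⟩)
    · intro hx
      rcases hx with (⟨hxB, hxS⟩ | hxC) | hxe
      · exact ⟨hxB.1.1, fun hw => hxB.2 hw.1⟩
      · exact ⟨hxC.1.1, fun hw => hxC.2 hw.2⟩
      · rw [mem_singleton_iff] at hxe
        subst hxe
        exact ⟨he, fun hw => (hA hw.1).2 rfl⟩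
  have habs : M.rankOf (Z ∪ {e}) = M.rankOf Z := by
    have hsub := rankOf_submod hE Z (B ∪ {e})
    have e1 : Z ∪ (B ∪ {e}) = Z ∪ {e} := by
      rw [← union_assoc, union_eq_self_of_subset_right hBZ]
    have e2 : Z ∩ (B ∪ {e}) = B := by
      apply Subset.antisymm
      · rintro x ⟨hxZ, hxB | hxe⟩
        · exact hxB
        · exact absurd (mem_singleton_iff.mp hxe) (fun h => (hZE hxZ).2 h)
      · exact fun x hx => ⟨hBZ hx, Or.inl hx⟩
    rw [e1, e2, hBe] at hsub
    have hmono : M.rankOf Z ≤ M.rankOf (Z ∪ {e}) := rankOf_mono hE subset_union_left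
    omega
  have hupper : M.rankOf W + M.rankOf (M.E \ W) ≤ M.rankOf M.E := by
    rw [hcompl, habs]
    have hZle : M.rankOf Z ≤ M.rankOf (B ∩ S) + M.rankOf C := rankOf_union_le hE
    omega
  have hlower : M.rankOf M.E ≤ M.rankOf W + M.rankOf (M.E \ W) := by
    calc M.rankOf M.E = M.rankOf (W ∪ (M.E \ W)) := by
          rw [union_diff_cancel hWE]
      _ ≤ _ := rankOf_union_le hE
  have hsep : M.IsSep W := ⟨hWE, le_antisymm hupper hlower⟩
  rcases hconn.eq_empty_or_ground hsep with h | h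
  · exact h
  · exact absurd (h ▸ he : e ∈ W) (fun hw => (hA hw.1).2 rfl)

lemma step_one (hE : M.E.Finite) (hconn : M.IsConn) {e : α} (he : e ∈ M.E)
    {P Q : Set α} (hP : P ⊆ M.E \ {e}) (hQ : Q = (M.E \ {e}) \ P)
    (hPne : P.Nonempty) (hQne : Q.Nonempty)
    (hsum : M.rankOf P + M.rankOf Q = M.rankOf M.E) :
    M.rankOf (Q ∪ {e}) = M.rankOf Q + 1 := by
  obtain ⟨p, hp⟩ := hPne
  have re1 : M.rankOf {e} = 1 :=
    hconn.rankOf_singleton hE he (hP hp).1 (hP hp).2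
  have hQE : Q ⊆ M.E \ {e} := by rw [hQ]; exact diff_subset
  have hcomplP : M.E \ P = Q ∪ {e} := by
    subst hQ
    ext x
    constructor
    · rintro ⟨hxE, hxP⟩
      by_cases hxe : x = e
      · exact Or.inr (mem_singleton_iff.mpr hxe)
      · exact Or.inl ⟨⟨hxE, hxe⟩, hxP⟩
    · intro hx
      rcases hx with ⟨⟨hxE, _⟩, hxP⟩ | hxe
      · exact ⟨hxE, hxP⟩
      · rw [mem_singleton_iff] at hxe
        subst hxe
        exact ⟨he, fun hpe => (hP hpe).2 rfl⟩
  have hns : M.rankOf P + M.rankOf (Q ∪ {e}) ≠ M.rankOf M.E := by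
    intro heq
    have hsep : M.IsSep P := ⟨fun x hx => (hP hx).1, by rw [hcomplP]; exact heq⟩
    rcases hconn.eq_empty_or_ground hsep with h | h
    · exact absurd (h ▸ hp) (notMem_empty p)
    · exact (hP (h ▸ he : e ∈ P)).2 rfl
  have hge : M.rankOf M.E ≤ M.rankOf P + M.rankOf (Q ∪ {e}) := by
    calc M.rankOf M.E = M.rankOf (P ∪ (Q ∪ {e})) := by
          rw [← union_assoc, show P ∪ Q = M.E \ {e} by
            rw [hQ, union_diff_cancel hP], diff_union_self,
            union_eq_self_of_subset_right (singleton_subset_iff.mpr he)]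
      _ ≤ _ := rankOf_union_le hE
  have hle : M.rankOf (Q ∪ {e}) ≤ M.rankOf Q + 1 := by
    have := rankOf_union_le hE (M := M) (X := Q) (Y := {e})
    omega
  omega

lemma sep_of_delElem_connectivity (hE : M.E.Finite) (hconn : M.IsConn) {e : α}
    (he : e ∈ M.E) {X : Set α} (hX : (M.delElem e).IsSep X) (hXne : X.Nonempty)
    (hXnE : X ≠ M.E \ {e}) :
    (M.conElem e).IsConn ∧ M.rankOf (X ∪ {e}) = M.rankOf X + 1 := by
  have hXE : X ⊆ M.E \ {e} := hX.1
  set Y : Set α := (M.E \ {e}) \ X with hY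
  have hYE : Y ⊆ M.E \ {e} := diff_subset
  have hYne : Y.Nonempty := by
    rw [hY, diff_nonempty]
    intro hsub
    exact hXnE (Subset.antisymm hXE hsub)
  obtain ⟨x₀, hx₀⟩ := hXne
  obtain ⟨y₀, hy₀⟩ := hYne
  have re1 : M.rankOf {e} = 1 :=
    hconn.rankOf_singleton hE he (hXE hx₀).1 (hXE hx₀).2
  have hEe : M.rankOf (M.E \ {e}) = M.rankOf M.E :=
    hconn.rankOf_diff_singleton hE he (hXE hx₀).1 (hXE hx₀).2
  have h1 : M.rankOf X + M.rankOf Y = M.rankOf M.E := by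
    have h := hX.2
    rw [delElem_ground, rankOf_delElem, rankOf_delElem, rankOf_delElem,
      inter_eq_self_of_subset_left hXE, inter_self,
      inter_eq_self_of_subset_left (diff_subset : (M.E \ {e}) \ X ⊆ M.E \ {e})] at h
    rw [← hY] at h
    omega
  have hXX : X = (M.E \ {e}) \ Y := by
    rw [hY, diff_diff_cancel_left hXE]
  constructor
  · -- M/e is connected
    rintro ⟨A, hA, hAne, hAnE⟩
    have hAE : A ⊆ M.E \ {e} := by
      have := hA.1; rwa [conElem_ground] at this
    set B : Set α := (M.E \ {e}) \ A with hBdef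
    have hBE : B ⊆ M.E \ {e} := diff_subset
    have hBne : B.Nonempty := by
      rw [hBdef, diff_nonempty]
      intro hsub
      exact hAnE (by rw [conElem_ground]; exact Subset.antisymm hAE hsub)
    have hEdel : (M.conElem e).E = M.E \ {e} := conElem_ground M e
    have k1 := rankOf_conElem_add hE he hAE
    have k2 := rankOf_conElem_add hE he (diff_subset : (M.E \ {e}) \ A ⊆ M.E \ {e})
    have k3 := rankOf_conElem_add hE he (subset_refl (M.E \ {e}))
    rw [show (M.E \ {e}) ∪ {e} = M.E by
      rw [diff_union_self, union_eq_self_of_subset_right (singleton_subset_iff.mpr he)]] at k3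
    have hsepA := hA.2
    rw [hEdel] at hsepA
    rw [← hBdef] at hsepA k2
    have hkey : M.rankOf (A ∪ {e}) + M.rankOf (B ∪ {e}) = M.rankOf M.E + 1 := by
      omega
    have habs : ∀ P Q : Set α, P ⊆ M.E \ {e} → Q = (M.E \ {e}) \ P → P.Nonempty →
        M.rankOf (P ∪ {e}) + M.rankOf (Q ∪ {e}) = M.rankOf M.E + 1 →
        M.rankOf (P ∪ {e}) = M.rankOf P := by
      intro P Q hPE hQdef hPne hPQ
      obtain ⟨p0, hp0⟩ := hPne
      have hcomplP : M.E \ P = Q ∪ {e} := by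
        subst hQdef
        ext x
        constructor
        · rintro ⟨hxE, hxP⟩
          by_cases hxe : x = e
          · exact Or.inr (mem_singleton_iff.mpr hxe)
          · exact Or.inl ⟨⟨hxE, hxe⟩, hxP⟩
        · intro hx
          rcases hx with ⟨⟨hxE, _⟩, hxP⟩ | hxe
          · exact ⟨hxE, hxP⟩
          · rw [mem_singleton_iff] at hxe
            subst hxe
            exact ⟨he, fun hpe => (hPE hpe).2 rfl⟩
      have hns : M.rankOf P + M.rankOf (Q ∪ {e}) ≠ M.rankOf M.E := by
        intro heq
        have hsep : M.IsSep P := ⟨fun x hx => (hPE hx).1, by rw [hcomplP]; exact heq⟩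
        rcases hconn.eq_empty_or_ground hsep with h | h
        · exact absurd (h ▸ hp0) (notMem_empty _)
        · exact (hPE (h ▸ he : e ∈ P)).2 rfl
      have hge : M.rankOf M.E ≤ M.rankOf P + M.rankOf (Q ∪ {e}) := by
        calc M.rankOf M.E = M.rankOf (P ∪ (Q ∪ {e})) := by
              rw [← union_assoc, show P ∪ Q = M.E \ {e} by
                rw [hQdef, union_diff_cancel hPE], diff_union_self,
                union_eq_self_of_subset_right (singleton_subset_iff.mpr he)]
          _ ≤ _ := rankOf_union_le hE
      have hmono : M.rankOf P ≤ M.rankOf (P ∪ {e}) := rankOf_mono hE subset_union_left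
      omega
    have hclA : M.rankOf (A ∪ {e}) = M.rankOf A := habs A B hAE hBdef hAne hkey
    have hclB : M.rankOf (B ∪ {e}) = M.rankOf B := by
      refine habs B A hBE ?_ hBne (by omega)
      rw [hBdef, diff_diff_cancel_left hAE]
    have hrAB : M.rankOf A + M.rankOf B = M.rankOf M.E + 1 := by omega
    have hadd : ∀ Z : Set α, Z ⊆ M.E \ {e} →
        M.rankOf Z = M.rankOf (Z ∩ X) + M.rankOf (Z ∩ Y) := by
      intro Z hZ
      have hEdelfin : (M.delElem e).E.Finite := by
        rw [delElem_ground]; exact hE.diff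
      have h := hX.rankOf_add hEdelfin (by rw [delElem_ground]; exact hZ : Z ⊆ (M.delElem e).E)
      rw [rankOf_delElem, rankOf_delElem, rankOf_delElem,
        inter_eq_self_of_subset_left hZ,
        inter_eq_self_of_subset_left ((inter_subset_left.trans hZ) : Z ∩ X ⊆ M.E \ {e}),
        inter_eq_self_of_subset_left ((diff_subset.trans hZ) : Z \ X ⊆ M.E \ {e})] at h
      rw [h]
      congr 2
      rw [hY]
      ext x
      simp only [mem_diff, mem_inter_iff]
      exact ⟨fun hh => ⟨hh.1, hZ hh.1, hh.2⟩, fun hh => ⟨hh.1, hh.2.2⟩⟩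
    have hrA : M.rankOf A = M.rankOf (A ∩ X) + M.rankOf (A ∩ Y) := hadd A hAE
    have hrB : M.rankOf B = M.rankOf (B ∩ X) + M.rankOf (B ∩ Y) := hadd B hBE
    have hsplit : ∀ T : Set α, T ⊆ M.E \ {e} → T = (A ∩ T) ∪ (B ∩ T) := by
      intro T hT
      ext x
      constructor
      · intro hx
        by_cases hxA : x ∈ A
        · exact Or.inl ⟨hxA, hx⟩
        · exact Or.inr ⟨⟨hT hx, hxA⟩, hx⟩
      · rintro (⟨_, hx⟩ | ⟨_, hx⟩) <;> exact hx
    have hXbound : M.rankOf X ≤ M.rankOf (A ∩ X) + M.rankOf (B ∩ X) := by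
      calc M.rankOf X = M.rankOf ((A ∩ X) ∪ (B ∩ X)) := by rw [← hsplit X hXE]
        _ ≤ _ := rankOf_union_le hE
    have hYbound : M.rankOf Y ≤ M.rankOf (A ∩ Y) + M.rankOf (B ∩ Y) := by
      calc M.rankOf Y = M.rankOf ((A ∩ Y) ∪ (B ∩ Y)) := by rw [← hsplit Y hYE]
        _ ≤ _ := rankOf_union_le hE
    by_cases hcase : M.rankOf (A ∩ X) + M.rankOf (B ∩ X) = M.rankOf X
    · have hAX : A ∩ X = ∅ :=
        cross_empty hE hconn he hAE hBdef hXE hY hclB hcase (by omega)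
      have hBX : B ∩ X = ∅ := by
        refine cross_empty hE hconn he hBE ?_ hXE hY hclA (by omega) (by omega)
        rw [hBdef, diff_diff_cancel_left hAE]
      by_cases hxA : x₀ ∈ A
      · have hmem : x₀ ∈ A ∩ X := ⟨hxA, hx₀⟩
        rw [hAX] at hmem
        exact hmem
      · have hmem : x₀ ∈ B ∩ X := ⟨⟨hXE hx₀, hxA⟩, hx₀⟩
        rw [hBX] at hmem
        exact hmem
    · have hcase' : M.rankOf (A ∩ Y) + M.rankOf (B ∩ Y) = M.rankOf Y := by omega
      have hAY : A ∩ Y = ∅ :=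
        cross_empty hE hconn he hAE hBdef hYE hXX hclB hcase' (by omega)
      have hBY : B ∩ Y = ∅ := by
        refine cross_empty hE hconn he hBE ?_ hYE hXX hclA (by omega) (by omega)
        rw [hBdef, diff_diff_cancel_left hAE]
      by_cases hyA : y₀ ∈ A
      · have hmem : y₀ ∈ A ∩ Y := ⟨hyA, hy₀⟩
        rw [hAY] at hmem
        exact hmem
      · have hmem : y₀ ∈ B ∩ Y := ⟨⟨hYE hy₀, hyA⟩, hy₀⟩
        rw [hBY] at hmem
        exact hmem
  · exact step_one hE hconn he hYE hXX ⟨y₀, hy₀⟩ ⟨x₀, hx₀⟩ (by omega)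

lemma helper_con_side {N : Matroid α} (hfin : M.E.Finite) (hconn : M.IsConn) {e : α}
    (he : e ∈ M.E) (hminor : MinorOfElem N (M.delElem e)) {S : Set α}
    (hS : (M.delElem e).IsSep S) (hSne : S.Nonempty) (hSN : S ∩ N.E = ∅)
    (hX'ne : ((M.E \ {e}) \ S).Nonempty) :
    (M.conElem e).IsConn ∧ MinorOfElem N (M.conElem e) := by
  have hSE : S ⊆ M.E \ {e} := hS.1
  set X' : Set α := (M.E \ {e}) \ S with hX'
  have hX'E : X' ⊆ M.E \ {e} := diff_subset
  have hEdelfin : (M.delElem e).E.Finite := by rw [delElem_ground]; exact hfin.diff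
  have hX'sep : (M.delElem e).IsSep X' := by
    have := hS.compl
    rwa [delElem_ground] at this
  have hX'nE : X' ≠ M.E \ {e} := by
    intro heq
    obtain ⟨s, hs⟩ := hSne
    have : s ∈ X' := heq ▸ hSE hs
    exact this.2 hs
  obtain ⟨hconn', hrk⟩ :=
    sep_of_delElem_connectivity hfin hconn he hX'sep hX'ne hX'nE
  refine ⟨hconn', ?_⟩
  obtain ⟨s₀, hs₀⟩ := hSne
  have re1 : M.rankOf {e} = 1 :=
    hconn.rankOf_singleton hfin he (hSE hs₀).1 (hSE hs₀).2
  -- N is a minor of (M∖e) restricted to X'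
  have m1 := hminor.restrict_sep hEdelfin S hS
  have hNE : N.E \ S = N.E := by
    ext x
    constructor
    · exact fun hx => hx.1
    · intro hx
      refine ⟨hx, fun hxS => ?_⟩
      have : x ∈ S ∩ N.E := ⟨hxS, hx⟩
      rw [hSN] at this
      exact this
  rw [hNE, restrict_ground_eq_self] at m1
  have hgr : (M.delElem e).E \ S = X' := by rw [delElem_ground]
  rw [hgr] at m1
  have hMdX' : (M.delElem e) ↾ X' = M ↾ X' := by
    unfold delElem
    exact restrict_restrict_eq M (diff_subset : X' ⊆ M.E \ {e})
  rw [hMdX'] at m1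
  -- key: M ↾ X' = (M/e) ↾ X'
  have hkey : M ↾ X' = (M.conElem e) ↾ X' := by
    have hfin' : (M ↾ X').E.Finite := by
      rw [restrict_ground_eq]; exact (hfin.diff).diff
    refine eq_of_rankOf_eq hfin' (by rw [restrict_ground_eq, restrict_ground_eq]) ?_
    intro Z hZ
    rw [restrict_ground_eq] at hZ
    rw [rankOf_restrict, rankOf_restrict, inter_eq_self_of_subset_left hZ]
    have hZE : Z ⊆ M.E \ {e} := hZ.trans hX'E
    have k1 := rankOf_conElem_add hfin he hZE
    have hsub := rankOf_submod hfin (Z ∪ {e}) X'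
    have e1 : (Z ∪ {e}) ∪ X' = X' ∪ {e} := by
      rw [union_comm Z {e}, union_assoc, union_eq_self_of_subset_left hZ, union_comm]
    have e2 : (Z ∪ {e}) ∩ X' = Z := by
      apply Subset.antisymm
      · rintro x ⟨hxZ | hxe, hxX'⟩
        · exact hxZ
        · rw [mem_singleton_iff] at hxe
          exact absurd (hX'E hxX').2 (fun h => h hxe)
      · exact fun x hx => ⟨Or.inl hx, hZ hx⟩
    rw [e1, e2] at hsub
    have hle : M.rankOf (Z ∪ {e}) ≤ M.rankOf Z + 1 := by
      have := rankOf_union_le hfin (M := M) (X := Z) (Y := {e})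
      omega
    have hmonoX : M.rankOf Z ≤ M.rankOf X' := rankOf_mono hfin hZ
    omega
  rw [hkey] at m1
  -- (M/e) ↾ X' is a minor of M/e
  have hgr2 : (M.conElem e).E \ S = X' := by rw [conElem_ground]
  have m2 : MinorOfElem ((M.conElem e) ↾ X') (M.conElem e) := by
    rw [← hgr2]
    refine restrict_diff_minor ?_ ?_
    · rw [conElem_ground]; exact hfin.diff
    · rw [conElem_ground]; exact hSE
  exact m1.trans m2

lemma half_lemma {N : Matroid α} (hfin : M.E.Finite) (hconn : M.IsConn) {e : α}
    (he : e ∈ M.E) (hminor : MinorOfElem N (M.delElem e)) (hconnN : N.IsConn) :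
    ((M.delElem e).IsConn ∧ N.MinorOfElem (M.delElem e)) ∨
      ((M.conElem e).IsConn ∧ N.MinorOfElem (M.conElem e)) := by
  by_cases hdconn : (M.delElem e).IsConn
  · exact Or.inl ⟨hdconn, hminor⟩
  obtain ⟨X, hX, hXne, hXnE⟩ := not_not.mp hdconn
  have hXE : X ⊆ M.E \ {e} := hX.1
  have hXnE' : X ≠ M.E \ {e} := by rwa [delElem_ground] at hXnE
  have hEdelfin : (M.delElem e).E.Finite := by rw [delElem_ground]; exact hfin.diff
  have hYne : ((M.E \ {e}) \ X).Nonempty := by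
    rw [diff_nonempty]
    intro hsub
    exact hXnE' (Subset.antisymm hXE hsub)
  have hNsep : N.IsSep (X ∩ N.E) := hminor.isSep_inter hEdelfin hX
  rcases hconnN.eq_empty_or_ground hNsep with hcase | hcase
  · -- N.E avoids X : take S = X
    exact Or.inr (helper_con_side hfin hconn he hminor hX hXne hcase hYne)
  · -- N.E ⊆ X : take S = (M.E \ {e}) \ X
    have hNsub : N.E ⊆ X := by
      rw [← hcase]
      exact inter_subset_left
    have hYsep : (M.delElem e).IsSep ((M.E \ {e}) \ X) := by
      have := hX.compl
      rwa [delElem_ground] at this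
    have hYN : ((M.E \ {e}) \ X) ∩ N.E = ∅ := by
      ext x
      constructor
      · rintro ⟨hxY, hxN⟩
        exact absurd (hNsub hxN) hxY.2
      · exact fun hx => absurd hx (notMem_empty x)
    have hX'ne : ((M.E \ {e}) \ ((M.E \ {e}) \ X)).Nonempty := by
      rw [diff_diff_cancel_left hXE]
      exact hXne
    exact Or.inr (helper_con_side hfin hconn he hminor hYsep hYne hYN hX'ne)

end Matroid

open Matroid Set in
/-- **The Brylawski–Seymour splitter theorem.** Let `N` be a connected minor of a
connected finite matroid `M` and let `e ∈ E(M) − E(N)`. Then `M∖e` or `M/e` is connected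
and has `N` as a minor. -/
theorem matroid_splitter {α : Type*} (M N : Matroid α) (hfin : M.E.Finite)
    (hconn : M.IsConn) (hminor : N.MinorOfElem M) (hconnN : N.IsConn)
    (e : α) (heM : e ∈ M.E) (heN : e ∉ N.E) :
    ((M.delElem e).IsConn ∧ N.MinorOfElem (M.delElem e)) ∨
      ((M.conElem e).IsConn ∧ N.MinorOfElem (M.conElem e)) := by
  rcases hminor.del_or_con hfin e heN with h | h | h
  · exact half_lemma hfin hconn heM h hconnN
  · -- N is a minor of M/e : dualize
    have hNfin : N.E.Finite := hfin.subset hminor.ground_subset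
    have hfin' : M✶.E.Finite := by rwa [dual_ground]
    have hconn' : M✶.IsConn := hconn.dual hfin
    have hconnN' : N✶.IsConn := hconnN.dual hNfin
    have hm' : N✶.MinorOfElem (M✶.delElem e) := by
      have := h.dual
      rwa [dual_conElem] at this
    have he' : e ∈ M✶.E := by rwa [dual_ground]
    rcases half_lemma hfin' hconn' he' hm' hconnN' with ⟨hc, hm⟩ | ⟨hc, hm⟩
    · -- M✶∖e = (M/e)✶
      refine Or.inr ⟨?_, ?_⟩
      · have heq : M✶.delElem e = (M.conElem e)✶ := (dual_conElem M e).symm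
        rw [heq] at hc
        have hfin'' : (M.conElem e)✶.E.Finite := by
          rw [dual_ground, conElem_ground]; exact hfin.diff
        have := hc.dual hfin''
        rwa [dual_dual] at this
      · have heq : M✶.delElem e = (M.conElem e)✶ := (dual_conElem M e).symm
        rw [heq] at hm
        have := hm.dual
        rwa [dual_dual, dual_dual] at this
    · -- M✶/e = (M∖e)✶
      refine Or.inl ⟨?_, ?_⟩
      · have heq : M✶.conElem e = (M.delElem e)✶ := (dual_delElem M e).symm
        rw [heq] at hc
        have hfin'' : (M.delElem e)✶.E.Finite := by
          rw [dual_ground, delElem_ground]; exact hfin.diff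
        have := hc.dual hfin''
        rwa [dual_dual] at this
      · have heq : M✶.conElem e = (M.delElem e)✶ := (dual_delElem M e).symm
        rw [heq] at hm
        have := hm.dual
        rwa [dual_dual, dual_dual] at this
  · exact absurd heM h
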